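/- arXiv:0903.2555 — 4 statements merged into one kernel-verified Lean document; each statement's English description precedes it below -/
import Mathlib

section
/- Let X, Y be subsets of the positive integers and n ≥ 1 an integer with n+1 ∉ X ∪ Y. Then for all k ≥ 0, A_{n+1,k}^{X,Y} = (k+1) · A_{n,k+1}^{X,Y} + (n+1−k) · A_{n,k}^{X,Y}. -/
/-- `cnt X n` is `|X ∩ [n]|` where `[n] = {1, ..., n}`. -/
noncomputable def cnt (X : Set ℕ) (n : ℕ) : ℕ := (X ∩ Set.Icc 1 n).ncard

/-- `adj_{X,Y}(σ)`: number of `i` with `σ_i ∈ X` and `σ_{i+1} ∈ Y`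
(positions and values of `Fin n` are identified with `{1, ..., n}` via `i ↦ i + 1`). -/
noncomputable def adjCount (X Y : Set ℕ) (n : ℕ) (σ : Equiv.Perm (Fin n)) : ℕ :=
  {i : Fin n | ∃ h : (i : ℕ) + 1 < n,
    ((σ i : ℕ) + 1) ∈ X ∧ ((σ ⟨(i : ℕ) + 1, h⟩ : ℕ) + 1) ∈ Y}.ncard

/-- `A_{n,s}^{X,Y}`: the number of permutations of `[n]` with exactly `s`
`(X,Y)`-adjacencies. -/
noncomputable def A (X Y : Set ℕ) (n s : ℕ) : ℕ :=
  Nat.card {σ : Equiv.Perm (Fin n) | adjCount X Y n σ = s}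

open Finset Equiv

open scoped Classical

section Aux

variable (X Y : Set ℕ)

/-- The adjacency predicate. -/
def adjP (m : ℕ) (σ : Equiv.Perm (Fin m)) (i : Fin m) : Prop :=
  ∃ h : (i : ℕ) + 1 < m, ((σ i : ℕ) + 1) ∈ X ∧ ((σ ⟨(i : ℕ) + 1, h⟩ : ℕ) + 1) ∈ Y

lemma adjCount_eq (m : ℕ) (σ : Equiv.Perm (Fin m)) :
    adjCount X Y m σ = #(univ.filter (adjP X Y m σ)) := by
  rw [adjCount, ← Set.ncard_coe_finset]
  congr 1
  ext i
  simp [adjP]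

lemma A_eq (m s : ℕ) :
    A X Y m s = #(univ.filter (fun σ : Equiv.Perm (Fin m) => adjCount X Y m σ = s)) := by
  rw [A, Nat.card_coe_set_eq, ← Set.ncard_coe_finset]
  congr 1
  ext σ
  simp

/-- Insertion of the largest value at position `p`. -/
noncomputable def ins (n : ℕ) (τ : Equiv.Perm (Fin n)) (p : Fin (n + 1)) :
    Equiv.Perm (Fin (n + 1)) :=
  ((finSuccEquiv' p).trans τ.optionCongr).trans (finSuccEquiv' (Fin.last n)).symm

lemma ins_apply_self (n : ℕ) (τ : Equiv.Perm (Fin n)) (p : Fin (n + 1)) :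
    ins n τ p p = Fin.last n := by
  simp [ins, finSuccEquiv'_at, finSuccEquiv'_symm_none]

lemma ins_apply_succAbove (n : ℕ) (τ : Equiv.Perm (Fin n)) (p : Fin (n + 1)) (j : Fin n) :
    ins n τ p (p.succAbove j) = (τ j).castSucc := by
  simp [ins, finSuccEquiv'_succAbove, finSuccEquiv'_symm_some, Fin.succAbove_last]

lemma val_succAbove'' (n : ℕ) (p : Fin (n + 1)) (j : Fin n) :
    ((p.succAbove j : Fin (n + 1)) : ℕ) =
      if (j : ℕ) < (p : ℕ) then (j : ℕ) else (j : ℕ) + 1 := by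
  rcases lt_or_ge ((j : ℕ)) ((p : ℕ)) with hh | hh
  · rw [Fin.succAbove_of_castSucc_lt p j (by simpa [Fin.lt_def] using hh)]
    simp [hh]
  · rw [Fin.succAbove_of_le_castSucc p j (by simpa [Fin.le_def] using hh)]
    simp [Fin.val_succ, Nat.not_lt.mpr hh]

lemma ins_bijective (n : ℕ) :
    Function.Bijective
      (fun tp : Equiv.Perm (Fin n) × Fin (n + 1) => ins n tp.1 tp.2) := by
  rw [Fintype.bijective_iff_injective_and_card]
  constructor
  · rintro ⟨τ, p⟩ ⟨τ', p'⟩ hEq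
    simp only at hEq
    have hp : p = p' := by
      have h1 : ins n τ p p = Fin.last n := ins_apply_self n τ p
      have h2 : ins n τ' p' p' = Fin.last n := ins_apply_self n τ' p'
      have : ins n τ' p' p = Fin.last n := by rw [← hEq]; exact h1
      exact (Equiv.injective _) (this.trans h2.symm)
    subst hp
    have hτ : τ = τ' := by
      ext j
      have h1 : ins n τ p (p.succAbove j) = (τ j).castSucc := ins_apply_succAbove n τ p j
      have h2 : ins n τ' p (p.succAbove j) = (τ' j).castSucc := ins_apply_succAbove n τ' p j
      have : (τ j).castSucc = (τ' j).castSucc := by rw [← h1, ← h2, hEq]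
      exact_mod_cast congrArg Fin.val this
    rw [hτ]
  · simp [Fintype.card_perm, Nat.factorial_succ, mul_comm]

variable {X Y} (h : (↑(Fin.last 0) : ℕ) = 0)

/-- Key combinatorial lemma: inserting the largest value at position `p` kills
exactly the adjacency straddling `p` (if any). -/
lemma key_adj (n : ℕ) (hXY : (n : ℕ) + 1 ∉ X ∪ Y) (τ : Equiv.Perm (Fin n)) (p : Fin (n + 1)) :
    #(univ.filter (adjP X Y (n + 1) (ins n τ p))) =
      #(univ.filter (fun j : Fin n => adjP X Y n τ j ∧ (j : ℕ) + 1 ≠ (p : ℕ))) := by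
  have hX' : (n : ℕ) + 1 ∉ X := fun hx => hXY (Or.inl hx)
  have hY' : (n : ℕ) + 1 ∉ Y := fun hy => hXY (Or.inr hy)
  symm
  apply Finset.card_bij (fun j _ => p.succAbove j)
  · -- maps into the target filter
    rintro j hj
    simp only [mem_filter, mem_univ, true_and] at hj ⊢
    obtain ⟨⟨hlt, hx, hy⟩, hne⟩ := hj
    set j' : Fin n := ⟨(j : ℕ) + 1, hlt⟩ with hj'
    have hval : ((p.succAbove j' : Fin (n + 1)) : ℕ) = ((p.succAbove j : Fin (n + 1)) : ℕ) + 1 := by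
      rw [val_succAbove'', val_succAbove'']
      simp only [hj']
      split_ifs <;> omega
    have h1 : ((p.succAbove j : Fin (n + 1)) : ℕ) + 1 < n + 1 := by
      rw [← hval]; exact (p.succAbove j').isLt
    refine ⟨h1, ?_, ?_⟩
    · rw [ins_apply_succAbove]
      simpa using hx
    · have heq : (⟨((p.succAbove j : Fin (n + 1)) : ℕ) + 1, h1⟩ : Fin (n + 1)) = p.succAbove j' := by
        apply Fin.ext
        simp [hval]
      rw [heq, ins_apply_succAbove]
      simpa using hy
  · -- injective
    intro j₁ hj₁ j₂ hj₂ hEq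
    exact Fin.succAbove_right_injective hEq
  · -- surjective
    intro i hi
    simp only [mem_filter, mem_univ, true_and] at hi
    obtain ⟨h1, hx, hy⟩ := hi
    have hip : i ≠ p := by
      intro hip
      apply hX'
      rw [hip, ins_apply_self] at hx
      simpa using hx
    set i' : Fin (n + 1) := ⟨(i : ℕ) + 1, h1⟩ with hi'def
    have hip' : i' ≠ p := by
      intro hip'
      apply hY'
      rw [hip', ins_apply_self] at hy
      simpa using hy
    obtain ⟨j, hj⟩ := Fin.exists_succAbove_eq hip
    obtain ⟨j₂, hj₂⟩ := Fin.exists_succAbove_eq hip'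
    have hv1 : (i : ℕ) = if (j : ℕ) < (p : ℕ) then (j : ℕ) else (j : ℕ) + 1 := by
      rw [← hj, val_succAbove'']
    have hv2 : (i : ℕ) + 1 = if (j₂ : ℕ) < (p : ℕ) then (j₂ : ℕ) else (j₂ : ℕ) + 1 := by
      have : (i' : ℕ) = (i : ℕ) + 1 := rfl
      rw [← this, ← hj₂, val_succAbove'']
    have hj2v : (j₂ : ℕ) = (j : ℕ) + 1 := by split_ifs at hv1 hv2 <;> omega
    have hnep : (j : ℕ) + 1 ≠ (p : ℕ) := by split_ifs at hv1 hv2 <;> omega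
    have hltn : (j : ℕ) + 1 < n := by
      have := j₂.isLt; omega
    refine ⟨j, ?_, hj⟩
    simp only [mem_filter, mem_univ, true_and]
    refine ⟨⟨hltn, ?_, ?_⟩, hnep⟩
    · have := ins_apply_succAbove n τ p j
      rw [hj] at this
      rw [this] at hx
      simpa using hx
    · have hjj : (⟨(j : ℕ) + 1, hltn⟩ : Fin n) = j₂ := by
        apply Fin.ext; simp [hj2v]
      have h2 : ins n τ p i' = (τ j₂).castSucc := by
        rw [← hj₂, ins_apply_succAbove]
      rw [hjj]
      rw [h2] at hy
      simpa using hy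

/-- The number of adjacencies destroyed by inserting at position `p`. -/
noncomputable def dtp (X Y : Set ℕ) (n : ℕ) (τ : Equiv.Perm (Fin n)) (p : Fin (n + 1)) : ℕ :=
  #(univ.filter (fun j : Fin n => adjP X Y n τ j ∧ (j : ℕ) + 1 = (p : ℕ)))

lemma dtp_le_one (n : ℕ) (τ : Equiv.Perm (Fin n)) (p : Fin (n + 1)) :
    dtp X Y n τ p ≤ 1 := by
  apply Finset.card_le_one.2
  intro a ha b hb
  simp only [mem_filter, mem_univ, true_and] at ha hb
  apply Fin.ext
  omega

lemma adj_ins_add_dtp (n : ℕ) (hXY : (n : ℕ) + 1 ∉ X ∪ Y)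
    (τ : Equiv.Perm (Fin n)) (p : Fin (n + 1)) :
    adjCount X Y (n + 1) (ins n τ p) + dtp X Y n τ p = adjCount X Y n τ := by
  rw [adjCount_eq, adjCount_eq, key_adj n hXY τ p, dtp]
  have h2 : (univ.filter fun j : Fin n => adjP X Y n τ j ∧ (j : ℕ) + 1 = (p : ℕ)) =
      (univ.filter (adjP X Y n τ)).filter (fun j : Fin n => ¬ (j : ℕ) + 1 ≠ (p : ℕ)) := by
    rw [Finset.filter_filter]
    apply Finset.filter_congr
    intro j _
    tauto
  have h3 : (univ.filter fun j : Fin n => adjP X Y n τ j ∧ (j : ℕ) + 1 ≠ (p : ℕ)) =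
      (univ.filter (adjP X Y n τ)).filter (fun j : Fin n => (j : ℕ) + 1 ≠ (p : ℕ)) := by
    rw [Finset.filter_filter]
  rw [h2, h3]
  exact Finset.card_filter_add_card_filter_not _

lemma card_dtp_one (n : ℕ) (τ : Equiv.Perm (Fin n)) :
    #(univ.filter (fun p : Fin (n + 1) => dtp X Y n τ p = 1)) =
      #(univ.filter (adjP X Y n τ)) := by
  symm
  apply Finset.card_bij (fun (j : Fin n) _ => (⟨(j : ℕ) + 1, by omega⟩ : Fin (n + 1)))
  · intro j hj
    simp only [mem_filter, mem_univ, true_and] at hj ⊢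
    rw [dtp, Finset.card_eq_one]
    refine ⟨j, ?_⟩
    ext j'
    simp only [mem_filter, mem_univ, true_and, mem_singleton]
    constructor
    · rintro ⟨_, hv⟩
      apply Fin.ext; omega
    · rintro rfl
      exact ⟨hj, rfl⟩
  · intro j₁ _ j₂ _ hEq
    apply Fin.ext
    have := congrArg Fin.val hEq
    simpa using this
  · intro p hp
    simp only [mem_filter, mem_univ, true_and] at hp
    have hpos : 0 < dtp X Y n τ p := by omega
    rw [dtp, Finset.card_pos] at hpos
    obtain ⟨j, hj⟩ := hpos
    simp only [mem_filter, mem_univ, true_and] at hj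
    refine ⟨j, ?_, ?_⟩
    · simp only [mem_filter, mem_univ, true_and]; exact hj.1
    · apply Fin.ext; simp [hj.2]

lemma card_dtp_zero (n : ℕ) (τ : Equiv.Perm (Fin n)) :
    #(univ.filter (fun p : Fin (n + 1) => dtp X Y n τ p = 0)) =
      (n + 1) - #(univ.filter (adjP X Y n τ)) := by
  have htot := Finset.card_filter_add_card_filter_not
    (s := (univ : Finset (Fin (n + 1)))) (p := fun p => dtp X Y n τ p = 1)
  have hcongr : (univ : Finset (Fin (n + 1))).filter (fun p => ¬ dtp X Y n τ p = 1) =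
      univ.filter (fun p => dtp X Y n τ p = 0) := by
    apply Finset.filter_congr
    intro p _
    have := dtp_le_one (X := X) (Y := Y) n τ p
    constructor <;> intro <;> omega
  rw [hcongr] at htot
  rw [card_dtp_one] at htot
  simp only [Finset.card_univ, Fintype.card_fin] at htot
  omega

lemma count_positions (n : ℕ) (hXY : (n : ℕ) + 1 ∉ X ∪ Y) (k : ℕ) (τ : Equiv.Perm (Fin n)) :
    #(univ.filter (fun p : Fin (n + 1) => adjCount X Y (n + 1) (ins n τ p) = k)) =
      if adjCount X Y n τ = k + 1 then k + 1
      else if adjCount X Y n τ = k then n + 1 - k else 0 := by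
  set a := adjCount X Y n τ with ha
  have hiff : ∀ p : Fin (n + 1),
      (adjCount X Y (n + 1) (ins n τ p) = k) ↔
        ((a = k + 1 ∧ dtp X Y n τ p = 1) ∨ (a = k ∧ dtp X Y n τ p = 0)) := by
    intro p
    have h1 := adj_ins_add_dtp n hXY τ p
    have h2 := dtp_le_one (X := X) (Y := Y) n τ p
    rw [← ha] at h1
    omega
  rw [Finset.filter_congr (fun p _ => hiff p)]
  by_cases ha1 : a = k + 1
  · rw [if_pos ha1]
    have : (univ.filter (fun p : Fin (n + 1) =>
        (a = k + 1 ∧ dtp X Y n τ p = 1) ∨ (a = k ∧ dtp X Y n τ p = 0))) =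
        univ.filter (fun p => dtp X Y n τ p = 1) := by
      apply Finset.filter_congr
      intro p _
      constructor
      · rintro (⟨_, hd⟩ | ⟨hak, _⟩)
        · exact hd
        · omega
      · intro hd; exact Or.inl ⟨ha1, hd⟩
    rw [this, card_dtp_one]
    rw [adjCount_eq] at ha
    omega
  · by_cases ha0 : a = k
    · rw [if_neg ha1, if_pos ha0]
      have : (univ.filter (fun p : Fin (n + 1) =>
          (a = k + 1 ∧ dtp X Y n τ p = 1) ∨ (a = k ∧ dtp X Y n τ p = 0))) =
          univ.filter (fun p => dtp X Y n τ p = 0) := by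
        apply Finset.filter_congr
        intro p _
        constructor
        · rintro (⟨hak, _⟩ | ⟨_, hd⟩)
          · omega
          · exact hd
        · intro hd; exact Or.inr ⟨ha0, hd⟩
      rw [this, card_dtp_zero]
      rw [adjCount_eq] at ha
      omega
    · rw [if_neg ha1, if_neg ha0]
      rw [Finset.card_eq_zero, Finset.filter_eq_empty_iff]
      intro p _
      rintro (⟨hc, _⟩ | ⟨hc, _⟩) <;> omega

lemma adjCount_lt (n : ℕ) (hn : 1 ≤ n) (τ : Equiv.Perm (Fin n)) :
    adjCount X Y n τ < n := by
  rw [adjCount_eq]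
  have hlast : (⟨n - 1, by omega⟩ : Fin n) ∉ univ.filter (adjP X Y n τ) := by
    simp only [mem_filter, mem_univ, true_and]
    rintro ⟨hlt, _⟩
    simp at hlt
    omega
  have hsub : univ.filter (adjP X Y n τ) ⊆ univ.erase ⟨n - 1, by omega⟩ := by
    intro j hj
    rw [Finset.mem_erase]
    refine ⟨?_, mem_univ _⟩
    rintro rfl
    exact hlast hj
  calc #(univ.filter (adjP X Y n τ)) ≤ #(univ.erase (⟨n - 1, by omega⟩ : Fin n)) :=
        Finset.card_le_card hsub
    _ = n - 1 := by rw [Finset.card_erase_of_mem (mem_univ _)]; simp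
    _ < n := by omega

lemma A_rec_nat (n : ℕ) (hXY : (n : ℕ) + 1 ∉ X ∪ Y) (k : ℕ) :
    A X Y (n + 1) k = (k + 1) * A X Y n (k + 1) + (n + 1 - k) * A X Y n k := by
  rw [A_eq, A_eq, A_eq]
  have hbij := ins_bijective n
  set f := fun tp : Equiv.Perm (Fin n) × Fin (n + 1) => ins n tp.1 tp.2 with hf
  have step1 : #(univ.filter (fun σ : Equiv.Perm (Fin (n + 1)) => adjCount X Y (n + 1) σ = k)) =
      #(univ.filter (fun tp : Equiv.Perm (Fin n) × Fin (n + 1) =>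
        adjCount X Y (n + 1) (ins n tp.1 tp.2) = k)) := by
    symm
    apply Finset.card_equiv (Equiv.ofBijective f hbij)
    intro tp
    simp [Equiv.ofBijective, hf]
  rw [step1]
  rw [Finset.card_filter, Fintype.sum_prod_type]
  have step2 : ∀ τ : Equiv.Perm (Fin n),
      (∑ p : Fin (n + 1), if adjCount X Y (n + 1) (ins n τ p) = k then 1 else 0) =
        if adjCount X Y n τ = k + 1 then k + 1
        else if adjCount X Y n τ = k then n + 1 - k else 0 := by
    intro τ
    rw [← Finset.card_filter]
    exact count_positions n hXY k τ
  rw [Finset.sum_congr rfl (fun τ _ => step2 τ)]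
  have step3 : ∀ τ : Equiv.Perm (Fin n),
      (if adjCount X Y n τ = k + 1 then k + 1
        else if adjCount X Y n τ = k then n + 1 - k else 0) =
      (if adjCount X Y n τ = k + 1 then 1 else 0) * (k + 1) +
        (if adjCount X Y n τ = k then 1 else 0) * (n + 1 - k) := by
    intro τ
    split_ifs <;> omega
  rw [Finset.sum_congr rfl (fun τ _ => step3 τ)]
  rw [Finset.sum_add_distrib, ← Finset.sum_mul, ← Finset.sum_mul,
    ← Finset.card_filter, ← Finset.card_filter]
  ring

lemma A_ne_zero_lt (n : ℕ) (hn : 1 ≤ n) (k : ℕ) (hA : A X Y n k ≠ 0) : k < n := by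
  rw [A_eq] at hA
  have hne : (univ.filter (fun σ : Equiv.Perm (Fin n) => adjCount X Y n σ = k)).Nonempty :=
    Finset.card_pos.1 (Nat.pos_of_ne_zero hA)
  obtain ⟨τ, hτ⟩ := hne
  simp only [mem_filter, mem_univ, true_and] at hτ
  rw [← hτ]
  exact adjCount_lt n hn τ

end Aux

/-- Recurrence for `A_{n,k}^{X,Y}` when `n+1 ∉ X ∪ Y`:
`A_{n+1,k} = (k+1) A_{n,k+1} + (n+1-k) A_{n,k}`. -/
theorem A_rec_case1 (X Y : Set ℕ) (hX : 0 ∉ X) (hY : 0 ∉ Y) (n : ℕ) (hn : 1 ≤ n)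
    (h : n + 1 ∉ X ∪ Y) (k : ℕ) :
    (A X Y (n + 1) k : ℤ) =
      ((k : ℤ) + 1) * (A X Y n (k + 1) : ℤ) +
        ((n : ℤ) + 1 - (k : ℤ)) * (A X Y n k : ℤ) := by
  have hnat := A_rec_nat (X := X) (Y := Y) n (by exact_mod_cast h) k
  by_cases hA : A X Y n k = 0
  · rw [hnat, hA]
    push_cast
    ring
  · have hk : k < n := A_ne_zero_lt (X := X) (Y := Y) n hn k hA
    rw [hnat]
    have hle : k ≤ n + 1 := by omega
    push_cast [Nat.cast_sub hle]
    ring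
end

section
/- Let X, Y be subsets of the positive integers and n ≥ 1 an integer with n+1 ∈ X − Y. Then for all k ≥ 0, A_{n+1,k}^{X,Y} = (y_n − (k−1)) · A_{n,k−1}^{X,Y} + (n+1 − (y_n − k)) · A_{n,k}^{X,Y}, where the term with A_{n,k−1}^{X,Y} is omitted when k = 0. -/
namespace ARec
attribute [local instance] Classical.propDecidable
open Finset Equiv

variable {n : ℕ}

def Gfun (τ : Perm (Fin n)) (p : Fin (n+1)) (i : Fin (n+1)) : Fin (n+1) :=
  if h : (i : ℕ) < (p : ℕ) then (τ ⟨i, by have := p.isLt; omega⟩).castSucc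
  else if h2 : (i : ℕ) = (p : ℕ) then Fin.last n
  else (τ ⟨(i : ℕ) - 1, by have := i.isLt; omega⟩).castSucc

lemma Gfun_injective (τ : Perm (Fin n)) (p : Fin (n+1)) : Function.Injective (Gfun τ p) := by
  intro i j hij
  unfold Gfun at hij
  split_ifs at hij with h1 h2 h3 h4 h5 h6 h7 <;>
    first
    | (apply Fin.ext
       have h' := τ.injective (Fin.castSucc_injective _ hij)
       rw [Fin.mk.injEq] at h'
       omega)
    | (exact absurd hij (ne_of_lt (Fin.castSucc_lt_last _)))
    | (exact absurd hij (ne_of_gt (Fin.castSucc_lt_last _)))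
    | (apply Fin.ext; omega)

noncomputable def G (τ : Perm (Fin n)) (p : Fin (n+1)) : Perm (Fin (n+1)) :=
  Equiv.ofBijective _ (Finite.injective_iff_bijective.mp (Gfun_injective τ p))

lemma G_apply (τ : Perm (Fin n)) (p : Fin (n+1)) (i : Fin (n+1)) : G τ p i = Gfun τ p i :=
  Equiv.ofBijective_apply _ _ _


def pval (m : ℕ) (σ : Equiv.Perm (Fin m)) (i : ℕ) : ℕ :=
  if h : i < m then (σ ⟨i, h⟩ : ℕ) + 1 else 0

lemma pval_of_lt {m i : ℕ} (σ : Perm (Fin m)) (h : i < m) :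
    pval m σ i = (σ ⟨i, h⟩ : ℕ) + 1 := dif_pos h

lemma pval_of_ge {m i : ℕ} (σ : Perm (Fin m)) (h : m ≤ i) : pval m σ i = 0 :=
  dif_neg (by omega)

lemma pval_G_lt (τ : Perm (Fin n)) (p : Fin (n+1)) {i : ℕ} (h : i < (p : ℕ)) :
    pval (n+1) (G τ p) i = pval n τ i := by
  have hp := p.isLt
  have hi : i < n + 1 := by omega
  have hi' : i < n := by omega
  rw [pval_of_lt _ hi, pval_of_lt _ hi', G_apply]
  unfold Gfun
  rw [dif_pos (show ((⟨i, hi⟩ : Fin (n+1)) : ℕ) < (p : ℕ) from h)]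
  simp [Fin.coe_castSucc]

lemma pval_G_self (τ : Perm (Fin n)) (p : Fin (n+1)) :
    pval (n+1) (G τ p) (p : ℕ) = n + 1 := by
  rw [pval_of_lt _ p.isLt, G_apply]
  unfold Gfun
  rw [dif_neg (by simp), dif_pos rfl]
  simp [Fin.val_last]

lemma pval_G_gt (τ : Perm (Fin n)) (p : Fin (n+1)) {i : ℕ} (h : (p : ℕ) < i) :
    pval (n+1) (G τ p) i = pval n τ (i - 1) := by
  by_cases hi : i < n + 1
  · have hi' : i - 1 < n := by omega
    rw [pval_of_lt _ hi, pval_of_lt _ hi', G_apply]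
    unfold Gfun
    rw [dif_neg (by simp; omega), dif_neg (by simp; omega)]
    simp [Fin.coe_castSucc]
  · rw [pval_of_ge _ (by omega), pval_of_ge _ (by omega)]

lemma pval_le {m i : ℕ} (σ : Perm (Fin m)) : pval m σ i ≤ m := by
  unfold pval
  split
  · exact (σ _).isLt
  · omega

lemma G_pair_injective :
    Function.Injective (fun tp : Perm (Fin n) × Fin (n+1) => G tp.1 tp.2) := by
  rintro ⟨τ, p⟩ ⟨ρ, q⟩ hG
  simp only at hG
  have hpv : ∀ i : ℕ, pval (n+1) (G τ p) i = pval (n+1) (G ρ q) i := by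
    intro i; rw [hG]
  have hpq : p = q := by
    apply Fin.ext
    by_contra hne
    have h1 := hpv p
    rw [pval_G_self] at h1
    rcases lt_or_gt_of_ne hne with hlt | hgt
    · rw [pval_G_lt ρ q hlt] at h1
      have := pval_le (i := (p : ℕ)) ρ
      omega
    · rw [pval_G_gt ρ q hgt] at h1
      have := pval_le (i := ((p : ℕ) - 1)) ρ
      omega
  subst hpq
  have hτρ : τ = ρ := by
    apply Equiv.ext
    intro j
    have hj := j.isLt
    by_cases hjp : (j : ℕ) < (p : ℕ)
    · have h1 := hpv j
      rw [pval_G_lt τ p hjp, pval_G_lt ρ p hjp, pval_of_lt _ hj, pval_of_lt _ hj] at h1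
      apply Fin.ext
      simpa using h1
    · have h1 := hpv ((j : ℕ) + 1)
      have hgt : (p : ℕ) < (j : ℕ) + 1 := by omega
      rw [pval_G_gt τ p hgt, pval_G_gt ρ p hgt] at h1
      simp only [Nat.add_sub_cancel] at h1
      rw [pval_of_lt _ hj, pval_of_lt _ hj] at h1
      apply Fin.ext
      simpa using h1
  rw [hτρ]

lemma G_pair_bijective :
    Function.Bijective (fun tp : Perm (Fin n) × Fin (n+1) => G tp.1 tp.2) := by
  rw [Fintype.bijective_iff_injective_and_card]
  refine ⟨G_pair_injective, ?_⟩
  simp only [Fintype.card_prod, Fintype.card_perm, Fintype.card_fin]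
  rw [Nat.factorial_succ, mul_comm]


lemma adjCount_eq (X Y : Set ℕ) (hY : 0 ∉ Y) (m : ℕ) (σ : Equiv.Perm (Fin m)) :
    adjCount X Y m σ =
      ((Finset.range m).filter (fun i => pval m σ i ∈ X ∧ pval m σ (i+1) ∈ Y)).card := by
  rw [adjCount, Set.ncard_eq_toFinset_card', Set.toFinset_setOf]
  have himg : (Finset.range m).filter (fun i => pval m σ i ∈ X ∧ pval m σ (i+1) ∈ Y)
      = (Finset.univ.filter (fun i : Fin m => ∃ h : (i : ℕ) + 1 < m,
          ((σ i : ℕ) + 1) ∈ X ∧ ((σ ⟨(i : ℕ) + 1, h⟩ : ℕ) + 1) ∈ Y)).image Fin.val := by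
    ext a
    simp only [mem_image, mem_filter, mem_univ, true_and, mem_range]
    constructor
    · rintro ⟨ha, hx, hy⟩
      have h1 : a + 1 < m := by
        by_contra hc
        rw [pval_of_ge σ (by omega)] at hy
        exact hY hy
      refine ⟨⟨a, ha⟩, ⟨h1, ?_, ?_⟩, rfl⟩
      · rwa [pval_of_lt σ ha] at hx
      · rwa [pval_of_lt σ h1] at hy
    · rintro ⟨i, ⟨h1, hx, hy⟩, rfl⟩
      refine ⟨i.isLt, ?_, ?_⟩
      · rw [pval_of_lt σ i.isLt]
        simpa using hx
      · rw [pval_of_lt σ h1]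
        exact hy
  rw [himg, Finset.card_image_of_injective _ Fin.val_injective]

lemma A_eq (X Y : Set ℕ) (m s : ℕ) :
    A X Y m s = (Finset.univ.filter (fun σ : Perm (Fin m) => adjCount X Y m σ = s)).card := by
  rw [A, Nat.card_eq_fintype_card]
  exact (Fintype.card_subtype _).trans rfl

lemma lt_of_pval_memX {X : Set ℕ} (hX : 0 ∉ X) {m i : ℕ} {σ : Perm (Fin m)}
    (h : pval m σ i ∈ X) : i < m := by
  by_contra hc
  rw [pval_of_ge σ (by omega)] at h
  exact hX h

def D (X Y : Set ℕ) (τ : Perm (Fin n)) (i : ℕ) : Prop :=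
  pval n τ i ∈ Y ∧ ¬(0 < i ∧ pval n τ (i-1) ∈ X)

def u (p j : ℕ) : ℕ := if j + 1 < p then j else j + 1

lemma u_injective (p : ℕ) : Function.Injective (u p) := by
  intro a b h
  unfold u at h
  split_ifs at h <;> omega

variable {X Y : Set ℕ}

lemma S_eq (hX : 0 ∉ X) (hY : 0 ∉ Y) (hXn : (n : ℕ) + 1 ∈ X) (hYn : (n : ℕ) + 1 ∉ Y)
    (τ : Perm (Fin n)) (p : Fin (n+1)) :
    (Finset.range (n+1)).filter
        (fun i => pval (n+1) (G τ p) i ∈ X ∧ pval (n+1) (G τ p) (i+1) ∈ Y) =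
      ((Finset.range n).filter (fun j => pval n τ j ∈ X ∧ pval n τ (j+1) ∈ Y)).image (u (p : ℕ))
        ∪ (if D X Y τ (p : ℕ) then {(p : ℕ)} else ∅) := by
  have hp := p.isLt
  ext i
  simp only [mem_union, mem_image, mem_filter, mem_range]
  constructor
  · rintro ⟨hi, hx, hy⟩
    by_cases h1 : i + 1 < (p : ℕ)
    · left
      rw [pval_G_lt τ p (by omega)] at hx
      rw [pval_G_lt τ p h1] at hy
      exact ⟨i, ⟨lt_of_pval_memX hX hx, hx, hy⟩, by simp [u, h1]⟩
    · by_cases h2 : i + 1 = (p : ℕ)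
      · exfalso
        rw [h2, pval_G_self] at hy
        exact hYn hy
      · by_cases h3 : i = (p : ℕ)
        · rw [h3] at hx hy
          rw [pval_G_gt τ p (by omega), Nat.add_sub_cancel] at hy
          by_cases h4 : 0 < (p : ℕ) ∧ pval n τ ((p : ℕ) - 1) ∈ X
          · left
            refine ⟨(p : ℕ) - 1, ⟨lt_of_pval_memX hX h4.2, h4.2, ?_⟩, ?_⟩
            · rw [Nat.sub_add_cancel h4.1]
              exact hy
            · have hnlt : ¬ ((p : ℕ) - 1 + 1 < (p : ℕ)) := by omega
              rw [h3]
              simp only [u, if_neg hnlt]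
              omega
          · right
            rw [if_pos (show D X Y τ (p : ℕ) from ⟨hy, h4⟩), h3]
            exact mem_singleton_self _
        · -- i > p
          have hgt : (p : ℕ) < i := by omega
          left
          rw [pval_G_gt τ p hgt] at hx
          rw [pval_G_gt τ p (by omega), Nat.add_sub_cancel] at hy
          have hb := lt_of_pval_memX hX hx
          refine ⟨i - 1, ⟨hb, hx, ?_⟩, ?_⟩
          · rw [Nat.sub_add_cancel (by omega)]
            exact hy
          · have hnlt : ¬ (i - 1 + 1 < (p : ℕ)) := by omega
            simp only [u, if_neg hnlt]
            omega
  · rintro (⟨j, ⟨hj, hx, hy⟩, rfl⟩ | hD)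
    · by_cases h1 : j + 1 < (p : ℕ)
      · rw [show u (p : ℕ) j = j from if_pos h1]
        refine ⟨by omega, ?_, ?_⟩
        · rwa [pval_G_lt τ p (by omega)]
        · rwa [pval_G_lt τ p h1]
      · rw [show u (p : ℕ) j = j + 1 from if_neg h1]
        by_cases h2 : j + 1 = (p : ℕ)
        · refine ⟨by omega, ?_, ?_⟩
          · rw [h2, pval_G_self]
            exact hXn
          · rw [pval_G_gt τ p (by omega), Nat.add_sub_cancel]
            exact hy
        · have hgt : (p : ℕ) < j + 1 := by omega
          refine ⟨by omega, ?_, ?_⟩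
          · rw [pval_G_gt τ p hgt, Nat.add_sub_cancel]
            exact hx
          · rw [pval_G_gt τ p (by omega), Nat.add_sub_cancel]
            exact hy
    · have hDp : D X Y τ (p : ℕ) := by
        by_contra hc
        simp [hc] at hD
      rw [if_pos hDp, mem_singleton] at hD
      subst hD
      refine ⟨by omega, ?_, ?_⟩
      · rw [pval_G_self]
        exact hXn
      · rw [pval_G_gt τ p (by omega), Nat.add_sub_cancel]
        exact hDp.1


lemma adj_G (hX : 0 ∉ X) (hY : 0 ∉ Y) (hXn : (n : ℕ) + 1 ∈ X) (hYn : (n : ℕ) + 1 ∉ Y)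
    (τ : Perm (Fin n)) (p : Fin (n+1)) :
    adjCount X Y (n+1) (G τ p) = adjCount X Y n τ + (if D X Y τ (p : ℕ) then 1 else 0) := by
  have hdisj : Disjoint
      (((Finset.range n).filter (fun j => pval n τ j ∈ X ∧ pval n τ (j+1) ∈ Y)).image (u (p : ℕ)))
      (if D X Y τ (p : ℕ) then ({(p : ℕ)} : Finset ℕ) else ∅) := by
    split_ifs with hD
    · rw [Finset.disjoint_singleton_right]
      simp only [mem_image, mem_filter, mem_range, not_exists]
      rintro j ⟨⟨hjn, hx, hy⟩, huj⟩
      unfold u at huj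
      split_ifs at huj with h1
      · omega
      · exact hD.2 ⟨by omega, by rw [show (p : ℕ) - 1 = j by omega]; exact hx⟩
    · simp
  rw [adjCount_eq X Y hY, adjCount_eq X Y hY, S_eq hX hY hXn hYn τ p,
    card_union_of_disjoint hdisj, Finset.card_image_of_injective _ (u_injective _)]
  congr 1
  split_ifs <;> simp

lemma D_card (hX : 0 ∉ X) (hY : 0 ∉ Y) (τ : Perm (Fin n)) :
    ((Finset.range n).filter (D X Y τ)).card + adjCount X Y n τ = cnt Y n := by
  have hcnt : cnt Y n = ((Finset.range n).filter (fun i => pval n τ i ∈ Y)).card := by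
    have hset : Y ∩ Set.Icc 1 n = ↑((Finset.Icc 1 n).filter (fun v => v ∈ Y)) := by
      ext v
      simp only [Set.mem_inter_iff, Set.mem_Icc, Finset.coe_filter, Finset.mem_Icc,
        Set.mem_setOf_eq]
      tauto
    rw [cnt, hset, Set.ncard_coe_finset]
    refine (Finset.card_nbij (fun i => pval n τ i) ?_ ?_ ?_).symm
    · intro i hi
      simp only [Finset.mem_coe, mem_filter, mem_range] at hi
      simp only [Finset.mem_coe, mem_filter, Finset.mem_Icc]
      refine ⟨⟨?_, pval_le τ⟩, hi.2⟩
      rw [pval_of_lt τ hi.1]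
      omega
    · intro a ha b hb hab
      simp only [coe_filter, Set.mem_setOf_eq, mem_range] at ha hb
      have hab' : pval n τ a = pval n τ b := hab
      rw [pval_of_lt τ ha.1, pval_of_lt τ hb.1] at hab'
      rename' hab' => hab
      have : τ ⟨a, ha.1⟩ = τ ⟨b, hb.1⟩ := Fin.ext (by omega)
      have := τ.injective this
      simpa [Fin.mk.injEq] using this
    · intro v hv
      simp only [coe_filter, Set.mem_setOf_eq, Finset.mem_Icc] at hv
      obtain ⟨⟨hv1, hv2⟩, hvY⟩ := hv
      refine ⟨(τ.symm ⟨v - 1, by omega⟩ : ℕ), ?_, ?_⟩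
      · simp only [coe_filter, Set.mem_setOf_eq, mem_range]
        refine ⟨(τ.symm _).isLt, ?_⟩
        rw [pval_of_lt τ (τ.symm _).isLt]
        simp only [Fin.eta, Equiv.apply_symm_apply]
        simpa [Nat.sub_add_cancel hv1] using hvY
      · show pval n τ _ = v
        rw [pval_of_lt τ (τ.symm _).isLt]
        simp only [Fin.eta, Equiv.apply_symm_apply]
        omega
  have hB : adjCount X Y n τ =
      ((Finset.range n).filter (fun i => pval n τ i ∈ Y ∧ 0 < i ∧ pval n τ (i-1) ∈ X)).card := by
    rw [adjCount_eq X Y hY]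
    refine Finset.card_nbij (fun j => j + 1) ?_ ?_ ?_
    · intro j hj
      simp only [Finset.mem_coe, mem_filter, mem_range] at hj ⊢
      obtain ⟨hjn, hx, hy⟩ := hj
      exact ⟨lt_of_pval_memX hY hy, hy, by omega, by simpa using hx⟩
    · intro a _ b _ hab
      have hab' : a + 1 = b + 1 := hab
      omega
    · intro i hi
      simp only [coe_filter, Set.mem_setOf_eq, mem_range] at hi ⊢
      obtain ⟨hin, hiY, hipos, hiX⟩ := hi
      refine ⟨i - 1, ⟨by omega, hiX, ?_⟩, by show i - 1 + 1 = i; omega⟩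
      rw [Nat.sub_add_cancel hipos]
      exact hiY
  have hsplit : ((Finset.range n).filter (fun i => pval n τ i ∈ Y)) =
      ((Finset.range n).filter (D X Y τ)) ∪
        ((Finset.range n).filter (fun i => pval n τ i ∈ Y ∧ 0 < i ∧ pval n τ (i-1) ∈ X)) := by
    rw [← Finset.filter_or]
    apply Finset.filter_congr
    intro i _
    unfold D
    tauto
  have hdisj2 : Disjoint ((Finset.range n).filter (D X Y τ))
      ((Finset.range n).filter (fun i => pval n τ i ∈ Y ∧ 0 < i ∧ pval n τ (i-1) ∈ X)) := by
    rw [Finset.disjoint_left]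
    intro a ha hb
    simp only [mem_filter, D] at ha hb
    tauto
  rw [hcnt, hsplit, card_union_of_disjoint hdisj2, hB]

lemma D_fin_card (hY : 0 ∉ Y) (τ : Perm (Fin n)) :
    (Finset.univ.filter (fun p : Fin (n+1) => D X Y τ (p : ℕ))).card =
      ((Finset.range n).filter (D X Y τ)).card := by
  refine Finset.card_nbij (fun p => (p : ℕ)) ?_ ?_ ?_
  · intro p hp
    simp only [Finset.mem_coe, mem_filter, mem_univ, true_and] at hp
    simp only [Finset.mem_coe, mem_filter, mem_range]
    exact ⟨lt_of_pval_memX hY hp.1, hp⟩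
  · intro a _ b _ hab
    exact Fin.val_injective hab
  · intro i hi
    simp only [coe_filter, Set.mem_setOf_eq, mem_range, mem_univ, true_and] at hi ⊢
    exact ⟨⟨i, by omega⟩, hi.2, rfl⟩


lemma inner_card (hX : 0 ∉ X) (hY : 0 ∉ Y) (τ : Perm (Fin n)) (k : ℕ) :
    (((Finset.univ.filter (fun p : Fin (n+1) =>
        adjCount X Y n τ + (if D X Y τ (p : ℕ) then 1 else 0) = k)).card : ℤ))
      = (if adjCount X Y n τ = k then ((n : ℤ) + 1 - ((cnt Y n : ℤ) - (k : ℤ))) else 0)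
        + (if adjCount X Y n τ + 1 = k then ((cnt Y n : ℤ) - ((k : ℤ) - 1)) else 0) := by
  have hc := D_card hX hY τ
  have hcfin := D_fin_card (X := X) hY τ
  have hcle : ((Finset.range n).filter (D X Y τ)).card ≤ n :=
    le_trans (Finset.card_filter_le _ _) (by simp)
  by_cases h1 : adjCount X Y n τ = k
  · have hfeq : (Finset.univ.filter (fun p : Fin (n+1) =>
        adjCount X Y n τ + (if D X Y τ (p : ℕ) then 1 else 0) = k))
        = Finset.univ.filter (fun p : Fin (n+1) => ¬ D X Y τ (p : ℕ)) := by
      apply Finset.filter_congr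
      intro p _
      by_cases hD : D X Y τ (p : ℕ)
      · rw [if_pos hD]
        exact iff_of_false (by omega) (by simpa using hD)
      · rw [if_neg hD]
        exact iff_of_true (by omega) hD
    rw [hfeq, Finset.filter_not, Finset.card_sdiff_of_subset (Finset.filter_subset _ _), hcfin]
    rw [if_pos h1, if_neg (by omega)]
    have hcard : (Finset.univ : Finset (Fin (n+1))).card = n + 1 := by simp
    rw [hcard]
    omega
  · by_cases h2 : adjCount X Y n τ + 1 = k
    · have hfeq : (Finset.univ.filter (fun p : Fin (n+1) =>
          adjCount X Y n τ + (if D X Y τ (p : ℕ) then 1 else 0) = k))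
          = Finset.univ.filter (fun p : Fin (n+1) => D X Y τ (p : ℕ)) := by
        apply Finset.filter_congr
        intro p _
        by_cases hD : D X Y τ (p : ℕ)
        · rw [if_pos hD]
          exact iff_of_true (by omega) hD
        · rw [if_neg hD]
          exact iff_of_false (by omega) hD
      rw [hfeq, hcfin, if_neg h1, if_pos h2]
      omega
    · have hfeq : (Finset.univ.filter (fun p : Fin (n+1) =>
          adjCount X Y n τ + (if D X Y τ (p : ℕ) then 1 else 0) = k)) = ∅ := by
        apply Finset.filter_false_of_mem
        intro p _
        split_ifs <;> omega
      rw [hfeq, if_neg h1, if_neg h2]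
      simp

lemma A_succ_sum (hX : 0 ∉ X) (hY : 0 ∉ Y) (hXn : (n : ℕ) + 1 ∈ X) (hYn : (n : ℕ) + 1 ∉ Y)
    (k : ℕ) :
    A X Y (n+1) k = ∑ τ : Perm (Fin n),
      ((Finset.univ.filter (fun p : Fin (n+1) =>
        adjCount X Y n τ + (if D X Y τ (p : ℕ) then 1 else 0) = k)).card) := by
  rw [A_eq]
  have hcard : (Finset.univ.filter (fun σ : Perm (Fin (n+1)) => adjCount X Y (n+1) σ = k)).card
      = (Finset.univ.filter (fun tp : Perm (Fin n) × Fin (n+1) =>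
          adjCount X Y (n+1) (G tp.1 tp.2) = k)).card := by
    symm
    refine Finset.card_nbij (fun tp => G tp.1 tp.2) ?_ ?_ ?_
    · intro tp htp
      simp only [Finset.mem_coe, mem_filter, mem_univ, true_and] at htp ⊢
      exact htp
    · intro a _ b _ hab
      exact G_pair_injective hab
    · intro σ hσ
      simp only [coe_filter, Set.mem_setOf_eq, mem_univ, true_and] at hσ ⊢
      obtain ⟨tp, htp⟩ := G_pair_bijective.surjective σ
      refine ⟨tp, ?_, htp⟩
      show adjCount X Y (n+1) (G tp.1 tp.2) = k
      have htp' : G tp.1 tp.2 = σ := htp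
      rw [htp']
      exact hσ
  rw [hcard, Finset.card_filter, Fintype.sum_prod_type]
  refine Finset.sum_congr rfl (fun τ _ => ?_)
  rw [Finset.card_filter]
  refine Finset.sum_congr rfl (fun p _ => ?_)
  rw [adj_G hX hY hXn hYn τ p]

end ARec

/-- Recurrence for `A_{n,k}^{X,Y}` when `n+1 ∈ X - Y`:
`A_{n+1,k} = (y_n - (k-1)) A_{n,k-1} + (n+1 - (y_n - k)) A_{n,k}`,
the first term being omitted when `k = 0`. -/
theorem A_rec_case3 (X Y : Set ℕ) (hX : 0 ∉ X) (hY : 0 ∉ Y) (n : ℕ) (hn : 1 ≤ n)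
    (h : n + 1 ∈ X \ Y) (k : ℕ) :
    (A X Y (n + 1) k : ℤ) =
      (if k = 0 then 0 else
        ((cnt Y n : ℤ) - ((k : ℤ) - 1)) * (A X Y n (k - 1) : ℤ)) +
        ((n : ℤ) + 1 - ((cnt Y n : ℤ) - (k : ℤ))) * (A X Y n k : ℤ) := by
  classical
  obtain ⟨hXn, hYn⟩ := h
  have h1 : (A X Y (n + 1) k : ℤ) = ∑ τ : Equiv.Perm (Fin n),
      (((Finset.univ.filter (fun p : Fin (n+1) =>
        adjCount X Y n τ + (if ARec.D X Y τ (p : ℕ) then 1 else 0) = k)).card : ℤ)) := by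
    rw [ARec.A_succ_sum hX hY hXn hYn k]
    push_cast
    rfl
  rw [h1, Finset.sum_congr rfl (fun τ _ => ARec.inner_card hX hY τ k),
    Finset.sum_add_distrib]
  have e1 : ∑ τ : Equiv.Perm (Fin n),
      (if adjCount X Y n τ = k then ((n : ℤ) + 1 - ((cnt Y n : ℤ) - (k : ℤ))) else 0)
      = ((n : ℤ) + 1 - ((cnt Y n : ℤ) - (k : ℤ))) * (A X Y n k : ℤ) := by
    rw [← Finset.sum_filter, Finset.sum_const, ARec.A_eq, nsmul_eq_mul, mul_comm]
  have e2 : ∑ τ : Equiv.Perm (Fin n),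
      (if adjCount X Y n τ + 1 = k then ((cnt Y n : ℤ) - ((k : ℤ) - 1)) else 0)
      = if k = 0 then 0 else ((cnt Y n : ℤ) - ((k : ℤ) - 1)) * (A X Y n (k - 1) : ℤ) := by
    by_cases hk : k = 0
    · rw [if_pos hk]
      refine Finset.sum_eq_zero (fun τ _ => ?_)
      rw [if_neg (by omega)]
    · rw [if_neg hk]
      have hcond : ∀ τ : Equiv.Perm (Fin n),
          (adjCount X Y n τ + 1 = k) = (adjCount X Y n τ = k - 1) :=
        fun τ => propext (by omega)
      simp only [hcond]
      rw [← Finset.sum_filter, Finset.sum_const, ARec.A_eq, nsmul_eq_mul, mul_comm]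
  rw [e1, e2, add_comm]
end

section
/- Let X, Y be subsets of the positive integers and n ≥ 1 an integer with n+1 ∉ X ∪ Y. Then for all k ≥ 0, V_{n+1,k}^{X,Y} = (k+1) · V_{n,k+1}^{X,Y} + (n+1−k) · V_{n,k}^{X,Y}. -/
/-- `val_{X,Y}(σ)`: number of positions `i ∈ [n]` with `i ∈ X` and `σ_i ∈ Y`
(positions and values of `Fin n` are identified with `{1, ..., n}` via `i ↦ i + 1`). -/
noncomputable def valCount (X Y : Set ℕ) (n : ℕ) (σ : Equiv.Perm (Fin n)) : ℕ :=
  {i : Fin n | ((i : ℕ) + 1) ∈ X ∧ (((σ i : ℕ)) + 1) ∈ Y}.ncard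

/-- `V_{n,k}^{X,Y}`: the number of permutations of `[n]` with exactly `k`
`(X,Y)`-place-value pairs. -/
noncomputable def V (X Y : Set ℕ) (n k : ℕ) : ℕ :=
  Nat.card {σ : Equiv.Perm (Fin n) | valCount X Y n σ = k}

open scoped Classical

noncomputable def extP {n : ℕ} (τ : Equiv.Perm (Fin n)) : Equiv.Perm (Fin (n+1)) where
  toFun := Fin.lastCases (Fin.last n) (fun i => (τ i).castSucc)
  invFun := Fin.lastCases (Fin.last n) (fun i => (τ.symm i).castSucc)
  left_inv := by
    intro i
    induction i using Fin.lastCases with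
    | last => simp
    | cast j => simp
  right_inv := by
    intro i
    induction i using Fin.lastCases with
    | last => simp
    | cast j => simp

@[simp] lemma extP_last {n : ℕ} (τ : Equiv.Perm (Fin n)) :
    extP τ (Fin.last n) = Fin.last n := by simp [extP]

@[simp] lemma extP_castSucc {n : ℕ} (τ : Equiv.Perm (Fin n)) (j : Fin n) :
    extP τ j.castSucc = (τ j).castSucc := by simp [extP]

noncomputable def Phi {n : ℕ} (τ : Equiv.Perm (Fin n)) (p : Fin (n+1)) :
    Equiv.Perm (Fin (n+1)) :=
  (Equiv.swap p (Fin.last n)).trans (extP τ)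

lemma Phi_apply {n : ℕ} (τ : Equiv.Perm (Fin n)) (p i : Fin (n+1)) :
    Phi τ p i = extP τ (Equiv.swap p (Fin.last n) i) := rfl

lemma S_eq {X Y : Set ℕ} {n : ℕ} (hX : (n+1) ∉ X) (hY : (n+1) ∉ Y)
    (τ : Equiv.Perm (Fin n)) (p : Fin (n+1)) :
    {i : Fin (n+1) | ((i : ℕ) + 1) ∈ X ∧ (((Phi τ p i : ℕ)) + 1) ∈ Y}
      = Fin.castSucc '' {j : Fin n |
          (((j : ℕ) + 1) ∈ X ∧ (((τ j : ℕ)) + 1) ∈ Y) ∧ Fin.castSucc j ≠ p} := by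
  ext i
  induction i using Fin.lastCases with
  | last =>
    simp only [Set.mem_setOf_eq, Set.mem_image, Fin.val_last]
    constructor
    · rintro ⟨hx, -⟩; exact absurd hx hX
    · rintro ⟨j, -, hj⟩
      exact absurd hj (Fin.castSucc_lt_last j).ne
  | cast j =>
    by_cases hp : Fin.castSucc j = p
    · have h1 : Phi τ p j.castSucc = Fin.last n := by
        rw [Phi_apply, hp, Equiv.swap_apply_left, extP_last]
      simp only [Set.mem_setOf_eq, h1, Fin.val_last, Set.mem_image]
      constructor
      · rintro ⟨-, hy⟩; exact absurd hy hY
      · rintro ⟨j', ⟨-, hne⟩, hj'⟩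
        exact absurd (hj'.trans hp) hne
    · have h1 : Phi τ p j.castSucc = (τ j).castSucc := by
        rw [Phi_apply, Equiv.swap_apply_of_ne_of_ne hp (Fin.castSucc_lt_last j).ne,
          extP_castSucc]
      simp only [Set.mem_setOf_eq, h1, Fin.coe_castSucc, Set.mem_image]
      constructor
      · intro hm; exact ⟨j, ⟨hm, hp⟩, rfl⟩
      · rintro ⟨j', ⟨hm, -⟩, hj'⟩
        rw [Fin.castSucc_inj] at hj'; subst hj'; exact hm

/-- the set of pair positions of `τ` -/
def Tset (X Y : Set ℕ) {n : ℕ} (τ : Equiv.Perm (Fin n)) : Set (Fin n) :=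
  {j : Fin n | ((j : ℕ) + 1) ∈ X ∧ (((τ j : ℕ)) + 1) ∈ Y}

lemma valCount_eq_Tset (X Y : Set ℕ) {n : ℕ} (τ : Equiv.Perm (Fin n)) :
    valCount X Y n τ = (Tset X Y τ).ncard := rfl

def hit (X Y : Set ℕ) {n : ℕ} (τ : Equiv.Perm (Fin n)) (p : Fin (n+1)) : Prop :=
  ∃ j ∈ Tset X Y τ, Fin.castSucc j = p

lemma hit_set_eq (X Y : Set ℕ) {n : ℕ} (τ : Equiv.Perm (Fin n)) :
    {p : Fin (n+1) | hit X Y τ p} = Fin.castSucc '' Tset X Y τ := rfl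

lemma val_Phi {X Y : Set ℕ} {n : ℕ} (hX : (n+1) ∉ X) (hY : (n+1) ∉ Y)
    (τ : Equiv.Perm (Fin n)) (p : Fin (n+1)) :
    valCount X Y (n+1) (Phi τ p)
      = if hit X Y τ p then (Tset X Y τ).ncard - 1 else (Tset X Y τ).ncard := by
  rw [valCount, S_eq hX hY, Set.ncard_image_of_injective _ (Fin.castSucc_injective n)]
  by_cases hh : hit X Y τ p
  · rw [if_pos hh]
    obtain ⟨j₀, hj₀, hjp⟩ := hh
    have hset : {j : Fin n | (((j : ℕ) + 1) ∈ X ∧ (((τ j : ℕ)) + 1) ∈ Y) ∧ Fin.castSucc j ≠ p}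
        = Tset X Y τ \ {j₀} := by
      ext j
      simp only [Set.mem_setOf_eq, Set.mem_diff, Set.mem_singleton_iff, Tset]
      constructor
      · rintro ⟨hm, hne⟩
        exact ⟨hm, fun hje => hne (hje ▸ hjp)⟩
      · rintro ⟨hm, hne⟩
        refine ⟨hm, fun hc => hne (Fin.castSucc_injective n (hc.trans hjp.symm))⟩
    rw [hset, Set.ncard_diff_singleton_of_mem hj₀]
  · rw [if_neg hh]
    congr 1
    ext j
    simp only [Set.mem_setOf_eq, Tset]
    constructor
    · rintro ⟨hm, -⟩; exact hm
    · intro hm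
      exact ⟨hm, fun hc => hh ⟨j, hm, hc⟩⟩

lemma val_le {X Y : Set ℕ} {n : ℕ} (τ : Equiv.Perm (Fin n)) : valCount X Y n τ ≤ n := by
  rw [valCount]
  calc _ ≤ (Set.univ : Set (Fin n)).ncard := Set.ncard_le_ncard (Set.subset_univ _)
    _ = n := by rw [Set.ncard_univ]; simp

lemma count_p {X Y : Set ℕ} {n : ℕ} (hX : (n+1) ∉ X) (hY : (n+1) ∉ Y)
    (τ : Equiv.Perm (Fin n)) (k : ℕ) :
    Nat.card {p : Fin (n+1) | valCount X Y (n+1) (Phi τ p) = k}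
      = if valCount X Y n τ = k + 1 then k + 1
        else if valCount X Y n τ = k then n + 1 - k else 0 := by
  have hv : valCount X Y n τ = (Tset X Y τ).ncard := rfl
  by_cases h1 : valCount X Y n τ = k + 1
  · rw [if_pos h1]
    have hset : {p : Fin (n+1) | valCount X Y (n+1) (Phi τ p) = k}
        = Fin.castSucc '' Tset X Y τ := by
      ext p
      rw [Set.mem_setOf_eq, val_Phi hX hY, ← hit_set_eq]
      by_cases hh : hit X Y τ p
      · simp [hh, ← hv, h1]
      · simp [hh, ← hv, h1]
    rw [Nat.card_coe_set_eq, hset,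
      Set.ncard_image_of_injective _ (Fin.castSucc_injective n), ← hv, h1]
  · rw [if_neg h1]
    by_cases h2 : valCount X Y n τ = k
    · rw [if_pos h2]
      have hset : {p : Fin (n+1) | valCount X Y (n+1) (Phi τ p) = k}
          = (Fin.castSucc '' Tset X Y τ)ᶜ := by
        ext p
        rw [Set.mem_setOf_eq, val_Phi hX hY, Set.mem_compl_iff, ← hit_set_eq]
        by_cases hh : hit X Y τ p
        · have hpos : 0 < (Tset X Y τ).ncard := by
            rw [Set.ncard_pos]
            obtain ⟨j, hj, -⟩ := hh
            exact ⟨j, hj⟩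
          simp only [hh, if_true, Set.mem_setOf_eq, not_true, iff_false]
          omega
        · simp [hh, ← hv, h2]
      rw [Nat.card_coe_set_eq, hset]
      have hcompl := Set.ncard_add_ncard_compl (Fin.castSucc '' Tset X Y τ)
      rw [Set.ncard_image_of_injective _ (Fin.castSucc_injective n), ← hv, h2] at hcompl
      have : Nat.card (Fin (n+1)) = n + 1 := by simp
      have hk : k ≤ n := h2 ▸ val_le τ
      omega
    · rw [if_neg h2]
      have hset : {p : Fin (n+1) | valCount X Y (n+1) (Phi τ p) = k} = ∅ := by
        ext p
        rw [Set.mem_setOf_eq, val_Phi hX hY]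
        by_cases hh : hit X Y τ p
        · have hpos : 0 < (Tset X Y τ).ncard := by
            rw [Set.ncard_pos]
            obtain ⟨j, hj, -⟩ := hh
            exact ⟨j, hj⟩
          simp only [hh, if_true, Set.mem_empty_iff_false, iff_false]
          omega
        · simp only [hh, if_false, Set.mem_empty_iff_false, iff_false, ← hv]
          exact h2
      rw [Nat.card_coe_set_eq, hset, Set.ncard_empty]

lemma Phi_bij {n : ℕ} :
    Function.Bijective (fun x : Equiv.Perm (Fin n) × Fin (n+1) => Phi x.1 x.2) := by
  rw [Fintype.bijective_iff_injective_and_card]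
  constructor
  · rintro ⟨τ, p⟩ ⟨τ', p'⟩ hE
    simp only at hE
    have hp : p = p' := by
      have h1 : Phi τ p p = Fin.last n := by
        rw [Phi_apply, Equiv.swap_apply_left, extP_last]
      have h2 : Phi τ' p' p = Fin.last n := by rw [← hE]; exact h1
      rw [Phi_apply] at h2
      have h3 : Equiv.swap p' (Fin.last n) p = Fin.last n := by
        have := (extP τ').injective (h2.trans (extP_last τ').symm)
        exact this
      have := congrArg (Equiv.swap p' (Fin.last n)) h3
      rwa [Equiv.swap_apply_self, Equiv.swap_apply_right] at this
    subst hp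
    have hext : extP τ = extP τ' := by
      refine Equiv.ext fun i => ?_
      have := congrArg (fun e : Equiv.Perm (Fin (n+1)) => e (Equiv.swap p (Fin.last n) i)) hE
      simpa [Phi, Equiv.swap_apply_self] using this
    have : τ = τ' := by
      ext j
      have := congrArg (fun e : Equiv.Perm (Fin (n+1)) => e j.castSucc) hext
      simp only [extP_castSucc] at this
      exact congrArg Fin.val (Fin.castSucc_injective n this)
    rw [this]
  · simp [Fintype.card_perm, Nat.factorial_succ, mul_comm]

lemma nat_card_prod_subtype {A B : Type*} [Fintype A] [Fintype B] (Q : A → B → Prop) :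
    Nat.card {x : A × B // Q x.1 x.2} = ∑ τ : A, Nat.card {p : B // Q τ p} := by
  classical
  rw [Nat.card_eq_fintype_card, Fintype.card_subtype, Finset.card_filter,
    ← Finset.univ_product_univ, Finset.sum_product]
  refine Finset.sum_congr rfl fun τ _ => ?_
  rw [Nat.card_eq_fintype_card, Fintype.card_subtype, Finset.card_filter]

lemma V_rec_nat (X Y : Set ℕ) (n : ℕ) (hX : (n+1) ∉ X) (hY : (n+1) ∉ Y) (k : ℕ) :
    V X Y (n + 1) k = (k + 1) * V X Y n (k + 1) + (n + 1 - k) * V X Y n k := by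
  classical
  let e := Equiv.ofBijective _ (Phi_bij (n := n))
  have hcard : V X Y (n+1) k
      = Nat.card {x : Equiv.Perm (Fin n) × Fin (n+1) // valCount X Y (n+1) (Phi x.1 x.2) = k} := by
    rw [V]
    exact (Nat.card_congr ((Equiv.subtypeEquiv e (fun x => Iff.rfl)) :
      {x : Equiv.Perm (Fin n) × Fin (n+1) // valCount X Y (n+1) (Phi x.1 x.2) = k}
        ≃ {σ : Equiv.Perm (Fin (n+1)) // valCount X Y (n+1) σ = k})).symm
  rw [hcard, nat_card_prod_subtype (fun τ p => valCount X Y (n+1) (Phi τ p) = k)]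
  have hstep : ∀ τ : Equiv.Perm (Fin n),
      Nat.card {p : Fin (n+1) // valCount X Y (n+1) (Phi τ p) = k}
        = (if valCount X Y n τ = k + 1 then k + 1 else 0)
          + (if valCount X Y n τ = k then n + 1 - k else 0) := by
    intro τ
    have h0 : Nat.card {p : Fin (n+1) // valCount X Y (n+1) (Phi τ p) = k}
        = Nat.card {p : Fin (n+1) | valCount X Y (n+1) (Phi τ p) = k} := rfl
    rw [h0, count_p hX hY τ k]
    by_cases h1 : valCount X Y n τ = k + 1
    · have h2 : ¬ valCount X Y n τ = k := by omega
      simp [h1, h2]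
    · by_cases h2 : valCount X Y n τ = k <;> simp [h1, h2]
  rw [Finset.sum_congr rfl fun τ _ => hstep τ, Finset.sum_add_distrib,
    ← Finset.sum_filter, ← Finset.sum_filter, Finset.sum_const, Finset.sum_const,
    smul_eq_mul, smul_eq_mul]
  have hV1 : V X Y n (k+1)
      = (Finset.univ.filter fun τ : Equiv.Perm (Fin n) => valCount X Y n τ = k+1).card := by
    rw [V, Nat.card_eq_fintype_card, Fintype.card_subtype]
    simp only [Set.mem_setOf_eq]
  have hV2 : V X Y n k
      = (Finset.univ.filter fun τ : Equiv.Perm (Fin n) => valCount X Y n τ = k).card := by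
    rw [V, Nat.card_eq_fintype_card, Fintype.card_subtype]
    simp only [Set.mem_setOf_eq]
  rw [hV1, hV2]
  ring

lemma V_eq_zero (X Y : Set ℕ) (n k : ℕ) (hk : n < k) : V X Y n k = 0 := by
  rw [V]
  have : {σ : Equiv.Perm (Fin n) | valCount X Y n σ = k} = ∅ := by
    ext σ
    simp only [Set.mem_setOf_eq, Set.mem_empty_iff_false, iff_false]
    have := val_le (X := X) (Y := Y) σ
    omega
  rw [this]
  simp

/-- Recurrence for `V_{n,k}^{X,Y}` when `n+1 ∉ X ∪ Y`:
`V_{n+1,k} = (k+1) V_{n,k+1} + (n+1-k) V_{n,k}`. -/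
theorem V_rec_case1 (X Y : Set ℕ) (hX : 0 ∉ X) (hY : 0 ∉ Y) (n : ℕ) (hn : 1 ≤ n)
    (h : n + 1 ∉ X ∪ Y) (k : ℕ) :
    (V X Y (n + 1) k : ℤ) =
      ((k : ℤ) + 1) * (V X Y n (k + 1) : ℤ) +
        ((n : ℤ) + 1 - (k : ℤ)) * (V X Y n k : ℤ) := by
  simp only [Set.mem_union, not_or] at h
  obtain ⟨hX', hY'⟩ := h
  have hnat := V_rec_nat X Y n hX' hY' k
  by_cases hk : k ≤ n
  · have h1 : ((n + 1 - k : ℕ) : ℤ) = (n : ℤ) + 1 - k := by omega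
    rw [hnat]
    push_cast [h1]
    ring
  · have hz1 : V X Y n k = 0 := V_eq_zero _ _ _ _ (by omega)
    have hz2 : V X Y n (k + 1) = 0 := V_eq_zero _ _ _ _ (by omega)
    rw [hnat, hz1, hz2]
    simp
end

section
/- Let X, Y be subsets of the positive integers and n ≥ 1 an integer with n+1 ∈ X − Y. Then for all k ≥ 0, V_{n+1,k}^{X,Y} = (y_n − (k−1)) · V_{n,k−1}^{X,Y} + (n+1 − (y_n − k)) · V_{n,k}^{X,Y}, where the term with V_{n,k−1}^{X,Y} is omitted when k = 0. -/
open Equiv Finset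
open scoped Classical
lemma valCount_eq_sum (X Y : Set ℕ) (n : ℕ) (σ : Equiv.Perm (Fin n)) :
    valCount X Y n σ = ∑ i : Fin n, if ((i : ℕ) + 1) ∈ X ∧ ((σ i : ℕ) + 1) ∈ Y then 1 else 0 := by
  rw [valCount, Set.ncard_eq_toFinset_card', Set.toFinset_setOf, Finset.card_filter]

lemma V_eq_card (X Y : Set ℕ) (n k : ℕ) :
    V X Y n k = (Finset.univ.filter fun σ : Perm (Fin n) => valCount X Y n σ = k).card := by
  rw [V, Nat.card_coe_set_eq, Set.ncard_eq_toFinset_card', Set.toFinset_setOf]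

lemma cnt_eq_card (Y : Set ℕ) (n : ℕ) :
    cnt Y n = (Finset.univ.filter fun j : Fin n => ((j : ℕ) + 1) ∈ Y).card := by
  rw [cnt]
  have hinj : Function.Injective (fun j : Fin n => (j : ℕ) + 1) := by
    intro a b hab
    simp only at hab
    exact Fin.val_injective (Nat.add_right_cancel hab)
  have h1 : Y ∩ Set.Icc 1 n
      = (fun j : Fin n => (j : ℕ) + 1) '' {j : Fin n | ((j : ℕ) + 1) ∈ Y} := by
    ext x
    simp only [Set.mem_inter_iff, Set.mem_Icc, Set.mem_image, Set.mem_setOf_eq]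
    constructor
    · rintro ⟨hxY, h1x, hxn⟩
      refine ⟨⟨x - 1, by omega⟩, ?_, ?_⟩
      · show (x - 1) + 1 ∈ Y
        have hx : x - 1 + 1 = x := by omega
        rw [hx]; exact hxY
      · show (x - 1) + 1 = x
        omega
    · rintro ⟨j, hjY, rfl⟩
      have := j.isLt
      exact ⟨hjY, by omega, by omega⟩
  rw [h1, Set.ncard_image_of_injective _ hinj, Set.ncard_eq_toFinset_card',
    Set.toFinset_setOf]

lemma class2_card (X Y : Set ℕ) (n : ℕ) (τ : Perm (Fin n)) :
    (Finset.univ.filter fun j : Fin n =>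
      ((j : ℕ) + 1) ∈ Y ∧ ((τ.symm j : ℕ) + 1) ∈ X).card = valCount X Y n τ := by
  rw [valCount, Set.ncard_eq_toFinset_card', Set.toFinset_setOf]
  apply Finset.card_bij (fun j _ => τ.symm j)
  · intro j hj
    simp only [mem_filter, mem_univ, true_and] at *
    exact ⟨hj.2, by rw [Equiv.apply_symm_apply]; exact hj.1⟩
  · intro a _ b _ hab; exact τ.symm.injective hab
  · intro i hi
    simp only [mem_filter, mem_univ, true_and] at hi
    exact ⟨τ i, by simp [hi.1, hi.2]⟩

lemma valCount_le_cnt (X Y : Set ℕ) (n : ℕ) (τ : Perm (Fin n)) :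
    valCount X Y n τ ≤ cnt Y n := by
  rw [← class2_card X Y n τ, cnt_eq_card]
  exact Finset.card_le_card (fun j hj => by
    simp only [mem_filter, mem_univ, true_and] at *; exact hj.1)

/-- The inverse of the decomposition bijection. -/
noncomputable def sig (n : ℕ) (o : Option (Fin n)) (τ : Perm (Fin n)) : Perm (Fin (n + 1)) :=
  (finSuccEquivLast.permCongr).symm (Equiv.Perm.decomposeOption.symm (o, τ))

noncomputable def Edec (n : ℕ) : Perm (Fin (n + 1)) ≃ Option (Fin n) × Perm (Fin n) :=
  (finSuccEquivLast.permCongr).trans Equiv.Perm.decomposeOption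

lemma sig_eq_symm (n : ℕ) (p : Option (Fin n) × Perm (Fin n)) :
    sig n p.1 p.2 = (Edec n).symm p := rfl

lemma sig_apply (n : ℕ) (o : Option (Fin n)) (τ : Perm (Fin n)) (i : Fin (n + 1)) :
    sig n o τ i = finSuccEquivLast.symm
      ((Equiv.swap none o) (Option.map τ (finSuccEquivLast i))) := by
  simp [sig, Equiv.permCongr_symm, Equiv.permCongr_apply, Equiv.Perm.decomposeOption,
    Equiv.Perm.mul_apply]

lemma sig_last (n : ℕ) (o : Option (Fin n)) (τ : Perm (Fin n)) :
    sig n o τ (Fin.last n) = finSuccEquivLast.symm o := by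
  rw [sig_apply]; simp

lemma sig_castSucc_none (n : ℕ) (τ : Perm (Fin n)) (i : Fin n) :
    sig n none τ (Fin.castSucc i) = Fin.castSucc (τ i) := by
  rw [sig_apply]; simp

lemma sig_castSucc_some (n : ℕ) (j : Fin n) (τ : Perm (Fin n)) (i : Fin n) :
    sig n (some j) τ (Fin.castSucc i) =
      if τ i = j then Fin.last n else Fin.castSucc (τ i) := by
  rw [sig_apply]
  simp only [finSuccEquivLast_castSucc, Option.map_some]
  rcases eq_or_ne (τ i) j with hij | hij
  · rw [hij, if_pos rfl, Equiv.swap_apply_right, finSuccEquivLast_symm_none]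
  · rw [if_neg hij,
      Equiv.swap_apply_of_ne_of_ne (Option.some_ne_none _) (by simpa using hij),
      finSuccEquivLast_symm_some]

lemma val_sig_none (X Y : Set ℕ) (n : ℕ) (hXn : (n + 1) ∈ X) (hYn : (n + 1) ∉ Y)
    (τ : Perm (Fin n)) :
    valCount X Y (n + 1) (sig n none τ) = valCount X Y n τ := by
  rw [valCount_eq_sum, valCount_eq_sum, Fin.sum_univ_castSucc]
  have hlast : sig n none τ (Fin.last n) = Fin.last n := by
    rw [sig_last, finSuccEquivLast_symm_none]
  rw [hlast]
  simp only [Fin.val_last, hYn, and_false, if_false, add_zero]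
  apply Finset.sum_congr rfl
  intro i _
  rw [sig_castSucc_none]
  simp [Fin.coe_castSucc]

lemma val_sig_some (X Y : Set ℕ) (n : ℕ) (hXn : (n + 1) ∈ X) (hYn : (n + 1) ∉ Y)
    (j : Fin n) (τ : Perm (Fin n)) :
    valCount X Y (n + 1) (sig n (some j) τ)
      + (if ((τ.symm j : ℕ) + 1) ∈ X ∧ ((j : ℕ) + 1) ∈ Y then 1 else 0)
    = valCount X Y n τ + (if ((j : ℕ) + 1) ∈ Y then 1 else 0) := by
  set i0 := τ.symm j with hi0
  have hτi0 : τ i0 = j := by rw [hi0, Equiv.apply_symm_apply]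
  rw [valCount_eq_sum, valCount_eq_sum, Fin.sum_univ_castSucc]
  have hlast : sig n (some j) τ (Fin.last n) = Fin.castSucc j := by
    rw [sig_last, finSuccEquivLast_symm_some]
  rw [hlast]
  simp only [Fin.val_last, Fin.coe_castSucc, hXn, true_and]
  have hsum : (∑ i : Fin n,
      if ((i : ℕ) + 1) ∈ X ∧ ((sig n (some j) τ (Fin.castSucc i) : ℕ) + 1) ∈ Y
        then 1 else 0)
      = ∑ i ∈ Finset.univ.erase i0,
          (if ((i : ℕ) + 1) ∈ X ∧ ((τ i : ℕ) + 1) ∈ Y then 1 else 0) := by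
    rw [← Finset.add_sum_erase _ _ (Finset.mem_univ i0)]
    have h0 : (if ((i0 : ℕ) + 1) ∈ X ∧
        ((sig n (some j) τ (Fin.castSucc i0) : ℕ) + 1) ∈ Y then 1 else 0) = 0 := by
      rw [sig_castSucc_some, if_pos hτi0]
      simp [Fin.val_last, hYn]
    rw [h0, zero_add]
    apply Finset.sum_congr rfl
    intro i hi
    have hne : τ i ≠ j := by
      intro hc
      exact (Finset.mem_erase.mp hi).1 (τ.injective (by rw [hτi0, hc]))
    rw [sig_castSucc_some, if_neg hne]
    simp [Fin.coe_castSucc]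
  rw [hsum]
  rw [← Finset.add_sum_erase _
    (fun i : Fin n => if ((i : ℕ) + 1) ∈ X ∧ ((τ i : ℕ) + 1) ∈ Y then 1 else 0)
    (Finset.mem_univ i0)]
  rw [hτi0]
  omega

/-- Recurrence for `V_{n,k}^{X,Y}` when `n+1 ∈ X - Y`:
`V_{n+1,k} = (y_n - (k-1)) V_{n,k-1} + (n+1 - (y_n - k)) V_{n,k}`,
the first term being omitted when `k = 0`. -/
theorem V_rec_case3 (X Y : Set ℕ) (hX : 0 ∉ X) (hY : 0 ∉ Y) (n : ℕ) (hn : 1 ≤ n)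
    (h : n + 1 ∈ X \ Y) (k : ℕ) :
    (V X Y (n + 1) k : ℤ) =
      (if k = 0 then 0 else
        ((cnt Y n : ℤ) - ((k : ℤ) - 1)) * (V X Y n (k - 1) : ℤ)) +
        ((n : ℤ) + 1 - ((cnt Y n : ℤ) - (k : ℤ))) * (V X Y n k : ℤ) := by
  obtain ⟨hXn, hYn⟩ := h
  -- Step 1: express V(n+1,k) as a double sum over (τ, o)
  have step1 : (V X Y (n + 1) k : ℤ) =
      ∑ τ : Perm (Fin n), ∑ o : Option (Fin n),
        (if valCount X Y (n + 1) (sig n o τ) = k then (1 : ℤ) else 0) := by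
    rw [V_eq_card]
    push_cast [Finset.card_filter]
    rw [Fintype.sum_equiv (Edec n)
      (fun σ => if valCount X Y (n + 1) σ = k then (1 : ℤ) else 0)
      (fun p => if valCount X Y (n + 1) (sig n p.1 p.2) = k then (1 : ℤ) else 0)
      (fun σ => by
        have hss : sig n ((Edec n) σ).1 ((Edec n) σ).2 = σ := by
          rw [sig_eq_symm]; exact (Edec n).symm_apply_apply σ
        simp only [hss])]
    rw [Fintype.sum_prod_type, Finset.sum_comm]
  rw [step1]
  -- Step 2: compute the inner sum for each τ
  have step2 : ∀ τ : Perm (Fin n),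
      ∑ o : Option (Fin n),
        (if valCount X Y (n + 1) (sig n o τ) = k then (1 : ℤ) else 0)
      = (if valCount X Y n τ = k then ((n : ℤ) + 1 - (cnt Y n : ℤ) + (k : ℤ)) else 0)
        + (if valCount X Y n τ + 1 = k then ((cnt Y n : ℤ) - ((k : ℤ) - 1)) else 0) := by
    intro τ
    set m := valCount X Y n τ with hm
    have hmle : m ≤ cnt Y n := valCount_le_cnt X Y n τ
    -- the count of "class 3" elements
    set C : Finset (Fin n) := Finset.univ.filter
      (fun j : Fin n => (((j : ℕ) + 1) ∈ Y ∧ ((τ.symm j : ℕ) + 1) ∉ X)) with hC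
    have hCcard : (C.card : ℤ) = (cnt Y n : ℤ) - (m : ℤ) := by
      have hsplit : ((Finset.univ.filter fun j : Fin n =>
          ((j : ℕ) + 1) ∈ Y ∧ ((τ.symm j : ℕ) + 1) ∈ X).card) + C.card
          = (Finset.univ.filter fun j : Fin n => ((j : ℕ) + 1) ∈ Y).card := by
        rw [hC]
        have h1 : ∀ (p : Fin n → Prop) [DecidablePred p],
            Finset.univ.filter (fun j : Fin n => ((j : ℕ) + 1) ∈ Y ∧ p j)
            = (Finset.univ.filter fun j : Fin n => ((j : ℕ) + 1) ∈ Y).filter p := by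
          intro p _; rw [Finset.filter_filter]
        rw [h1, h1]
        exact Finset.card_filter_add_card_filter_not _
      rw [class2_card] at hsplit
      rw [cnt_eq_card]
      push_cast [← hsplit]
      ring
    have hCle : C.card ≤ n := by
      simpa using Finset.card_le_card (Finset.filter_subset _ (Finset.univ : Finset (Fin n)))
    -- pointwise value of valCount on (some j)
    have hval : ∀ j : Fin n, valCount X Y (n + 1) (sig n (some j) τ)
        = if j ∈ C then m + 1 else m := by
      intro j
      have key := val_sig_some X Y n hXn hYn j τ
      rw [← hm] at key
      by_cases hj : j ∈ C
      · rw [if_pos hj]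
        rw [hC, Finset.mem_filter] at hj
        rw [if_neg (fun hc => hj.2.2 hc.1), if_pos hj.2.1] at key
        omega
      · rw [if_neg hj]
        rw [hC, Finset.mem_filter] at hj
        push_neg at hj
        by_cases hjY : ((j : ℕ) + 1) ∈ Y
        · have hjX : ((τ.symm j : ℕ) + 1) ∈ X := hj (Finset.mem_univ j) hjY
          rw [if_pos ⟨hjX, hjY⟩, if_pos hjY] at key
          omega
        · rw [if_neg (fun hc => hjY hc.2), if_neg hjY] at key
          omega
    rw [Fintype.sum_option]
    rw [val_sig_none X Y n hXn hYn τ, ← hm]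
    have hsum2 : ∑ j : Fin n,
        (if valCount X Y (n + 1) (sig n (some j) τ) = k then (1 : ℤ) else 0)
        = ∑ j : Fin n, (if j ∈ C then (if m + 1 = k then (1 : ℤ) else 0)
            else (if m = k then (1 : ℤ) else 0)) := by
      apply Finset.sum_congr rfl
      intro j _
      rw [hval j]
      by_cases hj : j ∈ C
      · rw [if_pos hj, if_pos hj]
      · rw [if_neg hj, if_neg hj]
    rw [hsum2, Finset.sum_ite, Finset.sum_const, Finset.sum_const]
    have hfC : Finset.univ.filter (fun j : Fin n => j ∈ C) = C := by
      simp [Finset.filter_mem_eq_inter]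
    have hfCc : (Finset.univ.filter (fun j : Fin n => j ∉ C)).card = n - C.card := by
      have h2 := Finset.card_filter_add_card_filter_not
        (s := (Finset.univ : Finset (Fin n))) (p := fun j => j ∈ C)
      rw [hfC] at h2
      simp only [Finset.card_univ, Fintype.card_fin] at h2
      omega
    rw [hfC, hfCc]
    have hcast : ((n - C.card : ℕ) : ℤ) = (n : ℤ) - (C.card : ℤ) := Nat.cast_sub hCle
    simp only [nsmul_eq_mul]
    by_cases h1 : m = k
    · have h2 : m + 1 ≠ k := by omega
      rw [if_pos h1, if_pos h1, if_neg h2, if_neg h2, hcast, hCcard, ← h1]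
      ring
    · rw [if_neg h1, if_neg h1]
      by_cases h2 : m + 1 = k
      · rw [if_pos h2, if_pos h2, hCcard]
        have hkm : (k : ℤ) = (m : ℤ) + 1 := by omega
        rw [hkm]
        ring
      · rw [if_neg h2, if_neg h2]
        ring
  simp only [step2]
  rw [Finset.sum_add_distrib]
  have hsumA : ∀ (c : ℤ) (k' : ℕ),
      ∑ τ : Perm (Fin n), (if valCount X Y n τ = k' then c else 0)
        = c * (V X Y n k' : ℤ) := by
    intro c k'
    rw [V_eq_card]
    push_cast [Finset.card_filter]
    rw [Finset.mul_sum]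
    apply Finset.sum_congr rfl
    intro τ _
    by_cases hv : valCount X Y n τ = k' <;> simp [hv]
  by_cases hk : k = 0
  · rw [if_pos hk]
    have hB : ∑ τ : Perm (Fin n),
        (if valCount X Y n τ + 1 = k then ((cnt Y n : ℤ) - ((k : ℤ) - 1)) else 0) = 0 := by
      apply Finset.sum_eq_zero
      intro τ _
      rw [if_neg (by omega)]
    rw [hB, hsumA]
    ring
  · have hk1 : k - 1 + 1 = k := by omega
    have hB : ∑ τ : Perm (Fin n),
        (if valCount X Y n τ + 1 = k then ((cnt Y n : ℤ) - ((k : ℤ) - 1)) else 0)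
        = ((cnt Y n : ℤ) - ((k : ℤ) - 1)) * (V X Y n (k - 1) : ℤ) := by
      rw [← hsumA ((cnt Y n : ℤ) - ((k : ℤ) - 1)) (k - 1)]
      apply Finset.sum_congr rfl
      intro τ _
      have : (valCount X Y n τ + 1 = k) ↔ (valCount X Y n τ = k - 1) := by omega
      rw [if_congr this rfl rfl]
    rw [hB, hsumA, if_neg hk]
    ring
end
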